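/- arXiv:2403.02468 — 2 statements merged into one kernel-verified Lean document; each statement's English description precedes it below -/
import Mathlib

section
/- Let L : ℝ^m → ℝ be convex, 1-coercive (i.e. L(α)/‖α‖ → ∞ as ‖α‖ → ∞), continuous, nonnegative with L(0) = 0, and let a ∈ ℝ^m, p ∈ ℝ. Then sup over α with ⟨a,α⟩ ≥ 0 of (-p⟨a,α⟩ - L(α)) plus sup over α with ⟨a,α⟩ ≤ 0 of (-p⟨a,α⟩ - L(α)) equals sup over all α ∈ ℝ^m of (-p⟨a,α⟩ - L(α)). -/
open Filter Set RealInnerProductSpace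

/-- One-dimensional consistency of the upwind numerical Hamiltonian:
`h₊ + h₋ = H(p)`. -/
theorem upwind_consistency_1d {m : ℕ}
    (L : EuclideanSpace ℝ (Fin m) → ℝ) (a : EuclideanSpace ℝ (Fin m)) (p : ℝ)
    (hconv : ConvexOn ℝ Set.univ L)
    (hcoer : Tendsto (fun α => L α / ‖α‖) (cocompact (EuclideanSpace ℝ (Fin m))) atTop)
    (hcont : Continuous L)
    (hnonneg : ∀ α, 0 ≤ L α)
    (hL0 : L 0 = 0) :
    sSup ((fun α => -p * ⟪a, α⟫ - L α) '' {α | 0 ≤ ⟪a, α⟫})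
      + sSup ((fun α => -p * ⟪a, α⟫ - L α) '' {α | ⟪a, α⟫ ≤ 0})
      = sSup (Set.range (fun α => -p * ⟪a, α⟫ - L α)) := by
  set f : EuclideanSpace ℝ (Fin m) → ℝ := fun α => -p * ⟪a, α⟫ - L α with hf
  have hf0 : f 0 = 0 := by simp [hf, hL0]
  have hfc : Continuous f :=
    ((continuous_const.mul (Continuous.inner continuous_const continuous_id)).sub hcont)
  -- boundedness above of the range of f
  have hbdd : BddAbove (Set.range f) := by
    have h1 : ∀ᶠ α in cocompact (EuclideanSpace ℝ (Fin m)), (|p| * ‖a‖ + 1) ≤ L α / ‖α‖ :=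
      hcoer.eventually (eventually_ge_atTop _)
    obtain ⟨K, hKc, hK⟩ := hasBasis_cocompact.eventually_iff.mp h1
    obtain ⟨M, hM⟩ := (hKc.image hfc).bddAbove
    refine ⟨max M 0, ?_⟩
    rintro x ⟨α, rfl⟩
    by_cases hα : α ∈ K
    · exact le_max_of_le_left (hM ⟨α, hα, rfl⟩)
    · by_cases h0 : α = 0
      · rw [h0, hf0]; exact le_max_right _ _
      · have hn : 0 < ‖α‖ := norm_pos_iff.mpr h0
        have hL : (|p| * ‖a‖ + 1) * ‖α‖ ≤ L α := (le_div_iff₀ hn).mp (hK hα)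
        have hcs : -p * ⟪a, α⟫ ≤ |p| * ‖a‖ * ‖α‖ := by
          calc -p * ⟪a, α⟫ ≤ |(-p) * ⟪a, α⟫| := le_abs_self _
            _ = |p| * |⟪a, α⟫| := by rw [abs_mul, abs_neg]
            _ ≤ |p| * (‖a‖ * ‖α‖) := by
                have := abs_real_inner_le_norm a α
                have := abs_nonneg p
                nlinarith [abs_nonneg ⟪a, α⟫]
            _ = |p| * ‖a‖ * ‖α‖ := by ring
        have : f α ≤ 0 := by simp only [hf]; nlinarith
        exact le_max_of_le_right this
  have hbP : BddAbove (f '' {α | 0 ≤ ⟪a, α⟫}) := BddAbove.mono (image_subset_range f _) hbdd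
  have hbM : BddAbove (f '' {α | ⟪a, α⟫ ≤ 0}) := BddAbove.mono (image_subset_range f _) hbdd
  have hneP : (f '' {α | 0 ≤ ⟪a, α⟫}).Nonempty := ⟨f 0, 0, by simp, rfl⟩
  have hneM : (f '' {α | ⟪a, α⟫ ≤ 0}).Nonempty := ⟨f 0, 0, by simp, rfl⟩
  have h0leP : (0 : ℝ) ≤ sSup (f '' {α | 0 ≤ ⟪a, α⟫}) := by
    have h := le_csSup hbP ⟨0, by simp, rfl⟩
    linarith [hf0]
  have h0leM : (0 : ℝ) ≤ sSup (f '' {α | ⟪a, α⟫ ≤ 0}) := by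
    have h := le_csSup hbM ⟨0, by simp, rfl⟩
    linarith [hf0]
  -- the global sup is the max of the two restricted sups
  have hunion : {α : EuclideanSpace ℝ (Fin m) | 0 ≤ ⟪a, α⟫} ∪ {α | ⟪a, α⟫ ≤ 0} = univ := by
    ext α
    simp only [mem_union, mem_setOf_eq, mem_univ, iff_true]
    exact le_total 0 ⟪a, α⟫
  have hH : sSup (Set.range f)
      = max (sSup (f '' {α | 0 ≤ ⟪a, α⟫})) (sSup (f '' {α | ⟪a, α⟫ ≤ 0})) := by
    rw [← image_univ, ← hunion, image_union, csSup_union hbP hneP hbM hneM]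
  -- the two restricted sups cannot both be positive
  have key : ¬ (0 < sSup (f '' {α | 0 ≤ ⟪a, α⟫}) ∧ 0 < sSup (f '' {α | ⟪a, α⟫ ≤ 0})) := by
    rintro ⟨hpP, hpM⟩
    obtain ⟨x, ⟨α, hα, rfl⟩, hx⟩ := exists_lt_of_lt_csSup hneP hpP
    obtain ⟨y, ⟨β, hβ, rfl⟩, hy⟩ := exists_lt_of_lt_csSup hneM hpM
    simp only [mem_setOf_eq] at hα hβ
    have hx' : 0 < -p * ⟪a, α⟫ - L α := hx
    have hy' : 0 < -p * ⟪a, β⟫ - L β := hy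
    have hu : 0 < ⟪a, α⟫ := by
      rcases hα.lt_or_eq with h | h
      · exact h
      · exfalso; rw [← h] at hx'; have := hnonneg α; nlinarith
    have hv : ⟪a, β⟫ < 0 := by
      rcases hβ.lt_or_eq with h | h
      · exact h
      · exfalso; rw [h] at hy'; have := hnonneg β; nlinarith
    have huv : 0 < ⟪a, α⟫ - ⟪a, β⟫ := by linarith
    set t : ℝ := (-⟪a, β⟫) / (⟪a, α⟫ - ⟪a, β⟫) with ht
    have ht0 : 0 < t := div_pos (by linarith) huv
    have ht1 : t < 1 := (div_lt_one huv).mpr (by linarith)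
    have htv : t * ⟪a, α⟫ + (1 - t) * ⟪a, β⟫ = 0 := by
      have hne : ⟪a, α⟫ - ⟪a, β⟫ ≠ 0 := ne_of_gt huv
      have hcancel : t * (⟪a, α⟫ - ⟪a, β⟫) = -⟪a, β⟫ := by
        rw [ht]; exact div_mul_cancel₀ _ hne
      linarith [hcancel]
    set γ := t • α + (1 - t) • β with hγdef
    have hγ0 : ⟪a, γ⟫ = 0 := by
      rw [hγdef, inner_add_right, real_inner_smul_right, real_inner_smul_right]
      exact htv
    have hconc : L γ ≤ t * L α + (1 - t) * L β :=
      hconv.2 (mem_univ α) (mem_univ β) ht0.le (by linarith) (by ring)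
    have hpz : p * (t * ⟪a, α⟫ + (1 - t) * ⟪a, β⟫) = 0 := by rw [htv, mul_zero]
    have hfγ : t * (-p * ⟪a, α⟫ - L α) + (1 - t) * (-p * ⟪a, β⟫ - L β) ≤ f γ := by
      simp only [hf]
      rw [hγ0]
      nlinarith [hconc, hpz]
    have h1 : 0 < f γ := by
      nlinarith [hfγ, mul_pos ht0 hx', mul_pos (by linarith : (0:ℝ) < 1 - t) hy']
    have h2 : f γ ≤ 0 := by
      simp only [hf, hγ0, mul_zero, zero_sub, neg_nonpos]
      exact hnonneg γ
    linarith
  -- conclude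
  rcases le_or_gt (sSup (f '' {α | 0 ≤ ⟪a, α⟫})) 0 with h | h
  · have hP0 : sSup (f '' {α | 0 ≤ ⟪a, α⟫}) = 0 := le_antisymm h h0leP
    rw [hH, hP0, zero_add, max_eq_right h0leM]
  · have hM0 : sSup (f '' {α | ⟪a, α⟫ ≤ 0}) = 0 := by
      refine le_antisymm ?_ h0leM
      by_contra hc
      exact key ⟨h, lt_of_not_ge hc⟩
    rw [hH, hM0, add_zero, max_eq_left h0leP]
end

section
/- Let a ∈ ℝ^m, p ∈ ℝ, and L : ℝ^m → ℝ convex, continuous, 1-coercive, nonnegative with L(0) = 0. Set h₊ = sup over α with ⟨a,α⟩ ≥ 0 of (-p⟨a,α⟩ - L(α)) and H(p) = sup over all α of (-p⟨a,α⟩ - L(α)). Then h₊ ∈ {0, H(p)}: either the maximizer set of H intersects {⟨a,α⟩ ≥ 0}, in which case h₊ = H(p), or it does not, in which case h₊ = 0. -/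
open Filter Set RealInnerProductSpace

/-- Dichotomy: the half-space supremum `h₊` equals `H(p)` if the argmax set meets the
half-space, and equals `0` otherwise. -/
theorem halfspace_sup_dichotomy {m : ℕ}
    (L : EuclideanSpace ℝ (Fin m) → ℝ) (a : EuclideanSpace ℝ (Fin m)) (p : ℝ)
    (hconv : ConvexOn ℝ Set.univ L)
    (hcont : Continuous L)
    (hcoer : Tendsto (fun α => L α / ‖α‖) (cocompact (EuclideanSpace ℝ (Fin m))) atTop)
    (hnonneg : ∀ α, 0 ≤ L α)
    (hL0 : L 0 = 0) :
    (({α | ∀ β, -p * ⟪a, β⟫ - L β ≤ -p * ⟪a, α⟫ - L α} ∩ {α | 0 ≤ ⟪a, α⟫}).Nonempty →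
      sSup ((fun α => -p * ⟪a, α⟫ - L α) '' {α | 0 ≤ ⟪a, α⟫})
        = sSup (Set.range (fun α => -p * ⟪a, α⟫ - L α))) ∧
    (¬ ({α | ∀ β, -p * ⟪a, β⟫ - L β ≤ -p * ⟪a, α⟫ - L α} ∩ {α | 0 ≤ ⟪a, α⟫}).Nonempty →
      sSup ((fun α => -p * ⟪a, α⟫ - L α) '' {α | 0 ≤ ⟪a, α⟫}) = 0) := by
  set F : EuclideanSpace ℝ (Fin m) → ℝ := fun α => -p * ⟪a, α⟫ - L α with hFdef
  set S : Set (EuclideanSpace ℝ (Fin m)) := {α | 0 ≤ ⟪a, α⟫} with hSdef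
  have hF0 : F 0 = 0 := by simp [hFdef, hL0]
  have h0S : (0 : EuclideanSpace ℝ (Fin m)) ∈ S := by simp [hSdef]
  have hFcont : Continuous F := by
    simp only [hFdef]
    exact (continuous_const.mul (continuous_const.inner continuous_id)).sub hcont
  -- F tends to -∞ at infinity
  have hbot : Tendsto F (cocompact (EuclideanSpace ℝ (Fin m))) atBot := by
    have h1 : ∀ᶠ α in cocompact (EuclideanSpace ℝ (Fin m)),
        (|p| * ‖a‖ + 1) ≤ L α / ‖α‖ :=
      hcoer.eventually (eventually_ge_atTop _)
    have h2 : ∀ᶠ α in cocompact (EuclideanSpace ℝ (Fin m)), (0:ℝ) < ‖α‖ :=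
      tendsto_norm_cocompact_atTop.eventually (eventually_gt_atTop 0)
    have key : ∀ᶠ α in cocompact (EuclideanSpace ℝ (Fin m)), F α ≤ -‖α‖ := by
      filter_upwards [h1, h2] with α hα hpos
      have hL : (|p| * ‖a‖ + 1) * ‖α‖ ≤ L α := (le_div_iff₀ hpos).mp hα
      have hCS : |⟪a, α⟫| ≤ ‖a‖ * ‖α‖ := abs_real_inner_le_norm a α
      have : -p * ⟪a, α⟫ ≤ |p| * ‖a‖ * ‖α‖ := by
        calc -p * ⟪a, α⟫ ≤ |(-p) * ⟪a, α⟫| := le_abs_self _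
          _ = |p| * |⟪a, α⟫| := by rw [abs_mul, abs_neg]
          _ ≤ |p| * (‖a‖ * ‖α‖) := by
              exact mul_le_mul_of_nonneg_left hCS (abs_nonneg p)
          _ = |p| * ‖a‖ * ‖α‖ := by ring
      simp only [hFdef]
      nlinarith
    exact tendsto_atBot_mono' _ key
      (tendsto_neg_atBot_iff.mpr tendsto_norm_cocompact_atTop)
  -- concavity inequality for F
  have hconc : ∀ (x y : EuclideanSpace ℝ (Fin m)) (t : ℝ), 0 ≤ t → t ≤ 1 →
      (1 - t) * F x + t * F y ≤ F ((1 - t) • x + t • y) := by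
    intro x y t ht0 ht1
    have hL : L ((1 - t) • x + t • y) ≤ (1 - t) * L x + t * L y := by
      have := hconv.2 (mem_univ x) (mem_univ y) (by linarith : (0:ℝ) ≤ 1 - t) ht0 (by ring)
      simpa [smul_eq_mul] using this
    have hlin : ⟪a, (1 - t) • x + t • y⟫ = (1 - t) * ⟪a, x⟫ + t * ⟪a, y⟫ := by
      rw [inner_add_right, real_inner_smul_right, real_inner_smul_right]
    simp only [hFdef, hlin]
    nlinarith
  -- bddAbove of range F
  obtain ⟨αg, hαg⟩ := hFcont.exists_forall_ge hbot
  have hbddr : BddAbove (Set.range F) := by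
    refine ⟨F αg, ?_⟩
    rintro _ ⟨β, rfl⟩
    exact hαg β
  have hbddi : BddAbove (F '' S) := hbddr.mono (image_subset_range F S)
  constructor
  · rintro ⟨αs, hmax, hαS⟩
    apply le_antisymm
    · exact csSup_le_csSup hbddr ⟨F 0, mem_image_of_mem F h0S⟩ (image_subset_range F S)
    · apply le_trans (csSup_le (range_nonempty F) ?_) (le_csSup hbddi (mem_image_of_mem F hαS))
      rintro _ ⟨β, rfl⟩
      exact hmax β
  · intro hempty
    -- maximizer on closed half-space S
    have hSclosed : IsClosed S := by
      have : S = (fun α => ⟪a, α⟫) ⁻¹' (Set.Ici 0) := rfl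
      rw [this]
      exact isClosed_Ici.preimage (continuous_const.inner continuous_id)
    obtain ⟨αs, hαS, hmaxS⟩ : ∃ x ∈ S, IsMaxOn F S x := by
      apply hFcont.continuousOn.exists_isMaxOn' hSclosed h0S
      rw [hF0]
      exact (hbot.eventually (eventually_le_atBot 0)).filter_mono inf_le_left
    have hsup : sSup (F '' S) = F αs := by
      apply le_antisymm
      · exact csSup_le ⟨F 0, mem_image_of_mem F h0S⟩ (by rintro _ ⟨β, hβ, rfl⟩; exact hmaxS hβ)
      · exact le_csSup hbddi (mem_image_of_mem F hαS)
    rw [hsup]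
    -- show ⟪a, αs⟫ = 0, otherwise αs is a global maximizer in S
    have hzero : ⟪a, αs⟫ = 0 := by
      by_contra hne
      have hc : 0 < ⟪a, αs⟫ := lt_of_le_of_ne hαS (Ne.symm hne)
      apply hempty
      refine ⟨αs, ?_, hαS⟩
      intro β
      show F β ≤ F αs
      set c := ⟪a, αs⟫
      set d := ⟪a, β⟫
      set t : ℝ := c / (c + |d| + 1) with htdef
      have hden : 0 < c + |d| + 1 := by positivity
      have ht0 : 0 < t := div_pos hc hden
      have ht1 : t < 1 := by
        rw [div_lt_one hden]
        have := abs_nonneg d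
        linarith
      have hmem : (1 - t) • αs + t • β ∈ S := by
        show 0 ≤ ⟪a, (1 - t) • αs + t • β⟫
        rw [inner_add_right, real_inner_smul_right, real_inner_smul_right]
        have h1 : t * (c + |d| + 1) = c := by
          rw [htdef, div_mul_cancel₀ _ hden.ne']
        have h2 : -|d| ≤ d := neg_abs_le d
        nlinarith
      have hcomb := hconc αs β t ht0.le ht1.le
      have hle : F ((1 - t) • αs + t • β) ≤ F αs := hmaxS hmem
      nlinarith
    have : F αs = -L αs := by
      show -p * ⟪a, αs⟫ - L αs = -L αs
      rw [hzero]; ring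
    have h1 : F αs ≤ 0 := by rw [this]; linarith [hnonneg αs]
    have h2 : 0 ≤ F αs := hF0 ▸ hmaxS h0S
    linarith
end
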